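/- Let $Z_1, Z_2, \dots$ be i.i.d. real random variables with CDF $F$ continuous at the $(1-\alpha)$-quantile $q_{1-\alpha}$ and strictly increasing in a neighbourhood of it. Then the empirical $(1-\alpha)(1+1/n)$-quantile $\hat q_n$ of $Z_1,\dots,Z_n$ converges almost surely to $q_{1-\alpha}$ as $n\to\infty$, and consequently $\mathrm{Prob}\{Z_{n+1} \le \hat q_n\} \to 1-\alpha$. -/

import Mathlib

open MeasureTheory ProbabilityTheory Filter
open Finset Topology

/-- The empirical `(1-α)(1+1/n)`-quantile of `Z 0, …, Z (n-1)`: the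
`⌈(1-α)(n+1)⌉`-th smallest value (the junk value `0` is used in the degenerate
case `⌈(1-α)(n+1)⌉ > n`, which occurs for at most finitely many `n`). -/
noncomputable def empiricalConformalQuantile {Ω : Type*} (α : ℝ) (Z : ℕ → Ω → ℝ)
    (n : ℕ) (ω : Ω) : ℝ :=
  let v : Fin n → ℝ := fun i => Z i ω
  if h : ⌈(1 - α) * (n + 1)⌉₊ - 1 < n then v (Tuple.sort v ⟨⌈(1 - α) * (n + 1)⌉₊ - 1, h⟩)
  else 0

section Aux

lemma orderStat_le_iff {n : ℕ} (v : Fin n → ℝ) (j : Fin n) (t : ℝ) :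
    v (Tuple.sort v j) ≤ t ↔ (j : ℕ) < #(univ.filter fun i => v i ≤ t) := by
  set σ := Tuple.sort v
  have hmono : Monotone (v ∘ σ) := Tuple.monotone_sort v
  have hcard : #(univ.filter fun j' : Fin n => v (σ j') ≤ t)
      = #(univ.filter fun i => v i ≤ t) := by
    refine Finset.card_nbij' σ σ.symm ?_ ?_ ?_ ?_ <;> simp [Set.MapsTo, Set.LeftInvOn, Set.RightInvOn]
  rw [← hcard]
  constructor
  · intro h
    have hsub : Finset.Iic j ⊆ univ.filter fun j' : Fin n => v (σ j') ≤ t := by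
      intro i hi
      simp only [Finset.mem_Iic] at hi
      simp only [Finset.mem_filter, Finset.mem_univ, true_and]
      exact le_trans (hmono hi) h
    have := Finset.card_le_card hsub
    rw [Fin.card_Iic] at this
    omega
  · intro h
    by_contra hc
    push_neg at hc
    have hsub : (univ.filter fun j' : Fin n => v (σ j') ≤ t) ⊆ Finset.Iio j := by
      intro i hi
      simp only [Finset.mem_filter, Finset.mem_univ, true_and] at hi
      simp only [Finset.mem_Iio]
      by_contra hij
      push_neg at hij
      exact absurd (le_trans (hmono hij) hi) (not_le.2 hc)
    have := Finset.card_le_card hsub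
    rw [Fin.card_Iio] at this
    omega

lemma countLe_measurable {n : ℕ} (t : ℝ) :
    Measurable (fun v : Fin n → ℝ => #(univ.filter fun i => v i ≤ t)) := by
  have : (fun v : Fin n → ℝ => #(univ.filter fun i => v i ≤ t))
      = fun v => ∑ i : Fin n, if v i ≤ t then 1 else 0 := by
    funext v; rw [Finset.card_filter]
  rw [this]
  exact Finset.measurable_sum _ fun i _ =>
    Measurable.ite (measurableSet_le (measurable_pi_apply i) measurable_const)
      measurable_const measurable_const

lemma quantFun_measurable {n j : ℕ} :
    Measurable (fun v : Fin n → ℝ =>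
      if h : j < n then v (Tuple.sort v ⟨j, h⟩) else 0) := by
  by_cases h : j < n
  · simp only [dif_pos h]
    apply measurable_of_Iic
    intro t
    have : (fun v : Fin n → ℝ => v (Tuple.sort v ⟨j, h⟩)) ⁻¹' Set.Iic t
        = {v : Fin n → ℝ | j < #(univ.filter fun i => v i ≤ t)} := by
      ext v
      simp [Set.mem_preimage, orderStat_le_iff v ⟨j, h⟩ t]
    rw [this]
    exact measurableSet_lt measurable_const (countLe_measurable t)
  · simp only [dif_neg h]; exact measurable_const

lemma empCDF_tendsto {Ω : Type*} [MeasurableSpace Ω] (P : Measure Ω) [IsProbabilityMeasure P]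
    (Z : ℕ → Ω → ℝ) (hmeas : ∀ i, Measurable (Z i))
    (hindep : iIndepFun Z P)
    (hident : ∀ i, Measure.map (Z i) P = Measure.map (Z 0) P) (t : ℝ) :
    ∀ᵐ ω ∂P, Tendsto (fun n : ℕ => (#(univ.filter fun i : Fin n => Z (i : ℕ) ω ≤ t) : ℝ) / n)
      atTop (𝓝 ((P {ω | Z 0 ω ≤ t}).toReal)) := by
  set φ : ℝ → ℝ := Set.indicator (Set.Iic t) (fun _ => 1) with hφdef
  have hφ : Measurable φ := measurable_const.indicator measurableSet_Iic
  set X : ℕ → Ω → ℝ := fun i ω => φ (Z i ω) with hXdef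
  have hX0 : X 0 = Set.indicator (Z 0 ⁻¹' Set.Iic t) (fun _ => (1:ℝ)) := by
    funext ω; by_cases h : Z 0 ω ≤ t <;>
      simp [hXdef, hφdef, Set.indicator_apply, Set.mem_Iic, Set.mem_preimage, h]
  have hint : Integrable (X 0) P := by
    rw [hX0]
    exact (integrable_const (1:ℝ)).indicator ((hmeas 0) measurableSet_Iic)
  have hpair : Pairwise (Function.onFun (IndepFun · · P) X) := fun i j hij =>
    (hindep.indepFun hij).comp hφ hφ
  have hid : ∀ i, IdentDistrib (X i) (X 0) P P := fun i =>
    (IdentDistrib.comp ⟨(hmeas i).aemeasurable, (hmeas 0).aemeasurable, hident i⟩ hφ)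
  have hmean : P[X 0] = (P {ω | Z 0 ω ≤ t}).toReal := by
    rw [hX0, integral_indicator_const (1:ℝ) ((hmeas 0) measurableSet_Iic)]
    simp [Set.preimage, Set.mem_Iic, measureReal_def]
  have := strong_law_ae X hint hpair hid
  rw [hmean] at this
  filter_upwards [this] with ω hω
  have heq : ∀ n : ℕ, (n : ℝ)⁻¹ • (∑ i ∈ range n, X i ω)
      = (#(univ.filter fun i : Fin n => Z (i : ℕ) ω ≤ t) : ℝ) / n := by
    intro n
    rw [smul_eq_mul, inv_mul_eq_div]
    congr 1
    rw [← Fin.sum_univ_eq_sum_range (fun i => X i ω) n, Finset.card_filter]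
    push_cast
    refine Finset.sum_congr rfl fun i _ => ?_
    simp [hXdef, hφdef, Set.indicator_apply, Set.mem_Iic, Set.mem_preimage]
  exact Tendsto.congr heq hω

end Aux

/-- Asymptotic validity of inductive conformal prediction: for i.i.d. real random
variables `Z 0, Z 1, …` whose CDF `F` is continuous at the `(1-α)`-quantile
`q_{1-α}` and strictly increasing in a neighbourhood of it, the empirical
`(1-α)(1+1/n)`-quantile `q̂ₙ` of `Z 0, …, Z (n-1)` converges almost surely to
`q_{1-α}`, and consequently the coverage `Prob{Zₙ ≤ q̂ₙ}` converges to `1-α`. -/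
theorem conformal_asymptotic_validity
    {Ω : Type*} [MeasurableSpace Ω] (P : Measure Ω) [IsProbabilityMeasure P]
    (Z : ℕ → Ω → ℝ) (hmeas : ∀ i, Measurable (Z i))
    (hindep : iIndepFun Z P)
    (hident : ∀ i, Measure.map (Z i) P = Measure.map (Z 0) P)
    (α : ℝ) (hα : α ∈ Set.Ioo (0 : ℝ) 1)
    (F : ℝ → ℝ) (hF : F = fun y => (P {ω | Z 0 ω ≤ y}).toReal)
    (q : ℝ) (hq : q = sInf {y : ℝ | 1 - α ≤ F y})
    (hcont : ContinuousAt F q)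
    (hstrict : ∃ ε > 0, StrictMonoOn F (Set.Ioo (q - ε) (q + ε))) :
    (∀ᵐ ω ∂P, Tendsto (fun n => empiricalConformalQuantile α Z n ω) atTop (nhds q)) ∧
      Tendsto (fun n => (P {ω | Z n ω ≤ empiricalConformalQuantile α Z n ω}).toReal)
        atTop (nhds (1 - α)) := by
  obtain ⟨hα0, hα1⟩ := hα
  obtain ⟨ε₀, hε₀, hsm⟩ := hstrict
  set μ := Measure.map (Z 0) P with hμ
  have hμprob : IsProbabilityMeasure μ := Measure.isProbabilityMeasure_map (hmeas 0).aemeasurable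
  have hμIic : ∀ y, μ (Set.Iic y) = P {ω | Z 0 ω ≤ y} := fun y => by
    rw [hμ, Measure.map_apply (hmeas 0) measurableSet_Iic]; rfl
  have hFc : F = ProbabilityTheory.cdf μ := by
    funext y; rw [hF]; rw [ProbabilityTheory.cdf_eq_real, measureReal_def, hμIic]
  have Fmono : Monotone F := hFc ▸ monotone_cdf μ
  have hS_ne : {y : ℝ | 1 - α ≤ F y}.Nonempty := by
    have h1 : Tendsto F atTop (𝓝 1) := hFc ▸ tendsto_cdf_atTop (μ := μ)
    obtain ⟨y, hy⟩ := (h1.eventually (eventually_gt_nhds (by linarith : 1 - α < 1))).exists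
    exact ⟨y, hy.le⟩
  have hS_bdd : BddBelow {y : ℝ | 1 - α ≤ F y} := by
    have h1 : Tendsto F atBot (𝓝 0) := hFc ▸ tendsto_cdf_atBot (μ := μ)
    obtain ⟨y₀, hy₀⟩ := (h1.eventually (eventually_lt_nhds (by linarith : (0:ℝ) < 1 - α))).exists
    refine ⟨y₀, fun s hs => ?_⟩
    by_contra hc
    push_neg at hc
    exact absurd (le_trans hs (Fmono hc.le)) (not_le.2 hy₀)
  have hq_gt : ∀ y, q < y → 1 - α ≤ F y := by
    intro y hy
    rw [hq] at hy
    obtain ⟨s, hs, hsy⟩ := (csInf_lt_iff hS_bdd hS_ne).1 hy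
    exact le_trans hs (Fmono hsy.le)
  have hFq_ge : 1 - α ≤ F q := by
    have ht : Tendsto F (𝓝[>] q) (𝓝 (F q)) := hcont.tendsto.mono_left nhdsWithin_le_nhds
    refine ge_of_tendsto ht ?_
    filter_upwards [self_mem_nhdsWithin] with y hy
    exact hq_gt y hy
  have hFq_le : F q ≤ 1 - α := by
    have ht : Tendsto F (𝓝[<] q) (𝓝 (F q)) := hcont.tendsto.mono_left nhdsWithin_le_nhds
    refine le_of_tendsto ht ?_
    filter_upwards [Ioo_mem_nhdsLT (by linarith : q - ε₀ < q)] with y hy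
    by_contra hc
    push_neg at hc
    have : q ≤ y := hq ▸ csInf_le hS_bdd hc.le
    exact absurd this (not_le.2 hy.2)
  have hFq : F q = 1 - α := le_antisymm hFq_le hFq_ge
  have hq_mem : q ∈ Set.Ioo (q - ε₀) (q + ε₀) := ⟨by linarith, by linarith⟩
  have hFp : ∀ δ : ℝ, 0 < δ → δ < ε₀ → 1 - α < F (q + δ) := by
    intro δ h1 h2
    have := hsm hq_mem ⟨by linarith, by linarith⟩ (by linarith : q < q + δ)
    linarith
  have hFm : ∀ δ : ℝ, 0 < δ → δ < ε₀ → F (q - δ) < 1 - α := by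
    intro δ h1 h2
    have := hsm ⟨by linarith, by linarith⟩ hq_mem (by linarith : q - δ < q)
    linarith
  -- the ceiling sequence
  have hk1 : ∀ n : ℕ, 1 ≤ ⌈(1 - α) * (n + 1)⌉₊ := by
    intro n
    exact Nat.ceil_pos.2 (mul_pos (by linarith) (by positivity))
  have hkdiv : Tendsto (fun n : ℕ => (⌈(1 - α) * (n + 1)⌉₊ : ℝ) / n) atTop (𝓝 (1 - α)) := by
    have h1n : Tendsto (fun n : ℕ => 1 / (n:ℝ)) atTop (𝓝 0) := tendsto_one_div_atTop_nhds_zero_nat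
    have hlow : Tendsto (fun n : ℕ => (1 - α) + (1 - α) * (1 / n)) atTop (𝓝 (1 - α)) := by
      have := (h1n.const_mul (1 - α)).const_add (1 - α)
      simpa using this
    have hhigh : Tendsto (fun n : ℕ => (1 - α) + (1 - α) * (1 / n) + 1 / n) atTop (𝓝 (1 - α)) := by
      have := hlow.add h1n
      simpa using this
    refine tendsto_of_tendsto_of_tendsto_of_le_of_le' hlow hhigh ?_ ?_
    · filter_upwards [eventually_ge_atTop 1] with n hn
      have hnpos : (0:ℝ) < n := by exact_mod_cast hn
      have heq : (1 - α) + (1 - α) * (1 / (n:ℝ)) = (1 - α) * (n + 1) / n := by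
        field_simp
      rw [heq]
      gcongr
      exact Nat.le_ceil _
    · filter_upwards [eventually_ge_atTop 1] with n hn
      have hnpos : (0:ℝ) < n := by exact_mod_cast hn
      have heq : (1 - α) + (1 - α) * (1 / (n:ℝ)) + 1 / n = ((1 - α) * (n + 1) + 1) / n := by
        field_simp
      rw [heq]
      gcongr
      exact (Nat.ceil_lt_add_one (mul_nonneg (by linarith) (by positivity))).le
  -- key: almost sure eventual localization
  have key : ∀ δ : ℝ, 0 < δ → δ < ε₀ → ∀ᵐ ω ∂P, ∀ᶠ n : ℕ in atTop,
      q - δ < empiricalConformalQuantile α Z n ω ∧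
        empiricalConformalQuantile α Z n ω ≤ q + δ := by
    intro δ h1 h2
    filter_upwards [empCDF_tendsto P Z hmeas hindep hident (q + δ),
      empCDF_tendsto P Z hmeas hindep hident (q - δ)] with ω hp hm
    have hFp' : (P {ω | Z 0 ω ≤ q + δ}).toReal = F (q + δ) := by rw [hF]
    have hFm' : (P {ω | Z 0 ω ≤ q - δ}).toReal = F (q - δ) := by rw [hF]
    rw [hFp'] at hp
    rw [hFm'] at hm
    have ev1 := hkdiv.eventually_lt hp (hFp δ h1 h2)
    have ev2 := hm.eventually_lt hkdiv (hFm δ h1 h2)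
    filter_upwards [ev1, ev2, eventually_ge_atTop 1] with n hn1 hn2 hnge
    have hnpos : (0:ℝ) < n := by exact_mod_cast hnge
    have hkN : ⌈(1 - α) * (n + 1)⌉₊ < #(univ.filter fun i : Fin n => Z (i:ℕ) ω ≤ q + δ) := by
      have := (div_lt_div_iff_of_pos_right hnpos).1 hn1
      exact_mod_cast this
    have hNk : #(univ.filter fun i : Fin n => Z (i:ℕ) ω ≤ q - δ) < ⌈(1 - α) * (n + 1)⌉₊ := by
      have := (div_lt_div_iff_of_pos_right hnpos).1 hn2
      exact_mod_cast this
    have hNle : #(univ.filter fun i : Fin n => Z (i:ℕ) ω ≤ q + δ) ≤ n := by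
      simpa using Finset.card_filter_le (univ : Finset (Fin n)) (fun i => Z (i:ℕ) ω ≤ q + δ)
    have hklt : ⌈(1 - α) * (n + 1)⌉₊ - 1 < n := by
      have := hk1 n; omega
    have hval : empiricalConformalQuantile α Z n ω =
        (fun i : Fin n => Z (i:ℕ) ω)
          (Tuple.sort (fun i : Fin n => Z (i:ℕ) ω) ⟨⌈(1 - α) * (n + 1)⌉₊ - 1, hklt⟩) := by
      simp only [empiricalConformalQuantile]
      rw [dif_pos hklt]
    constructor
    · rw [hval]
      by_contra hc
      push_neg at hc
      have := (orderStat_le_iff (fun i : Fin n => Z (i:ℕ) ω)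
        ⟨⌈(1 - α) * (n + 1)⌉₊ - 1, hklt⟩ (q - δ)).1 hc
      simp only at this
      omega
    · rw [hval]
      refine (orderStat_le_iff (fun i : Fin n => Z (i:ℕ) ω)
        ⟨⌈(1 - α) * (n + 1)⌉₊ - 1, hklt⟩ (q + δ)).2 ?_
      simp only
      omega
  -- part 1
  have main1 : ∀ᵐ ω ∂P, Tendsto (fun n => empiricalConformalQuantile α Z n ω) atTop (𝓝 q) := by
    have hae : ∀ᵐ ω ∂P, ∀ m : ℕ, ∀ᶠ n : ℕ in atTop,
        q - min (ε₀ / 2) (1 / (m + 1)) < empiricalConformalQuantile α Z n ω ∧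
          empiricalConformalQuantile α Z n ω ≤ q + min (ε₀ / 2) (1 / (m + 1)) := by
      rw [ae_all_iff]
      intro m
      refine key _ (lt_min (by linarith) (by positivity)) ?_
      exact lt_of_le_of_lt (min_le_left _ _) (by linarith)
    filter_upwards [hae] with ω hω
    rw [Metric.tendsto_atTop]
    intro ε hε
    obtain ⟨m, hm⟩ := exists_nat_one_div_lt hε
    obtain ⟨N, hN⟩ := eventually_atTop.1 (hω m)
    refine ⟨N, fun n hn => ?_⟩
    obtain ⟨hl, hr⟩ := hN n hn
    rw [Real.dist_eq]
    have habs : |empiricalConformalQuantile α Z n ω - q| ≤ min (ε₀ / 2) (1 / (m + 1)) :=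
      abs_le.2 ⟨by linarith, by linarith⟩
    calc |empiricalConformalQuantile α Z n ω - q| ≤ min (ε₀ / 2) (1 / (m + 1)) := habs
      _ ≤ 1 / (m + 1) := min_le_right _ _
      _ < ε := hm
  refine ⟨main1, ?_⟩
  -- measurability of the empirical quantile
  have hWmeas : ∀ n, Measurable (fun ω => empiricalConformalQuantile α Z n ω) := by
    intro n
    have heqf : (fun ω => empiricalConformalQuantile α Z n ω)
        = (fun v : Fin n → ℝ => if h : ⌈(1 - α) * (n + 1)⌉₊ - 1 < n
            then v (Tuple.sort v ⟨⌈(1 - α) * (n + 1)⌉₊ - 1, h⟩) else 0)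
          ∘ (fun ω (i : Fin n) => Z (i : ℕ) ω) := rfl
    rw [heqf]
    exact quantFun_measurable.comp (measurable_pi_lambda _ fun i => hmeas i)
  -- independence of the empirical quantile from Z n
  have hindepW : ∀ n, IndepFun (fun ω => empiricalConformalQuantile α Z n ω) (Z n) P := by
    intro n
    have hD : Disjoint (Finset.range n) ({n} : Finset ℕ) := by simp
    have h := hindep.indepFun_finset (Finset.range n) {n} hD hmeas
    have hmem : ∀ i : Fin n, (i : ℕ) ∈ Finset.range n := fun i => Finset.mem_range.2 i.2
    have hnm : n ∈ ({n} : Finset ℕ) := Finset.mem_singleton_self n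
    set φ₁ : ((i : (Finset.range n : Finset ℕ)) → ℝ) → ℝ := fun x =>
      (fun v : Fin n → ℝ => if h : ⌈(1 - α) * (n + 1)⌉₊ - 1 < n
          then v (Tuple.sort v ⟨⌈(1 - α) * (n + 1)⌉₊ - 1, h⟩) else 0)
        (fun i : Fin n => x ⟨(i : ℕ), hmem i⟩) with hφ₁
    set φ₂ : ((i : ({n} : Finset ℕ)) → ℝ) → ℝ := fun x => x ⟨n, hnm⟩ with hφ₂
    have hφ₁m : Measurable φ₁ := by
      have heq : φ₁ = (fun v : Fin n → ℝ => if h : ⌈(1 - α) * (n + 1)⌉₊ - 1 < n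
            then v (Tuple.sort v ⟨⌈(1 - α) * (n + 1)⌉₊ - 1, h⟩) else 0)
          ∘ (fun x (i : Fin n) => x ⟨(i : ℕ), hmem i⟩) := rfl
      rw [heq]
      exact quantFun_measurable.comp (measurable_pi_lambda _ fun i => measurable_pi_apply _)
    have hφ₂m : Measurable φ₂ := measurable_pi_apply _
    have h2 := h.comp hφ₁m hφ₂m
    exact h2
  -- the coverage identity
  have hGmeas : Measurable (fun w : ℝ => μ (Set.Iic w)) :=
    Monotone.measurable fun a b hab => measure_mono (Set.Iic_subset_Iic.2 hab)
  have hcov : ∀ n, P {ω | Z n ω ≤ empiricalConformalQuantile α Z n ω}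
      = ∫⁻ ω, μ (Set.Iic (empiricalConformalQuantile α Z n ω)) ∂P := by
    intro n
    have hWm := hWmeas n
    have hpairm : Measurable (fun ω => (empiricalConformalQuantile α Z n ω, Z n ω)) :=
      hWm.prodMk (hmeas n)
    have hset : MeasurableSet {p : ℝ × ℝ | p.2 ≤ p.1} :=
      measurableSet_le measurable_snd measurable_fst
    have h1 : {ω | Z n ω ≤ empiricalConformalQuantile α Z n ω}
        = (fun ω => (empiricalConformalQuantile α Z n ω, Z n ω)) ⁻¹' {p | p.2 ≤ p.1} := rfl
    rw [h1, ← Measure.map_apply hpairm hset,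
      (indepFun_iff_map_prod_eq_prod_map_map hWm.aemeasurable (hmeas n).aemeasurable).1
        (hindepW n),
      Measure.prod_apply hset]
    have h2 : ∀ w : ℝ, Prod.mk w ⁻¹' {p : ℝ × ℝ | p.2 ≤ p.1} = Set.Iic w := fun w => rfl
    simp_rw [h2, hident n]
    rw [lintegral_map hGmeas hWm]
  -- limit of the coverage
  have hμIicq : μ (Set.Iic q) = ENNReal.ofReal (1 - α) := by
    have h1 : (μ (Set.Iic q)).toReal = 1 - α := by
      rw [hμIic q, ← hFq, hF]
    rw [← h1, ENNReal.ofReal_toReal (measure_ne_top μ _)]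
  have hGeq : ∀ w : ℝ, μ (Set.Iic w) = ENNReal.ofReal (F w) := by
    intro w
    rw [hF]
    simp only
    rw [← hμIic w]
    exact (ENNReal.ofReal_toReal (measure_ne_top μ _)).symm
  have hlim : Tendsto (fun n => ∫⁻ ω, μ (Set.Iic (empiricalConformalQuantile α Z n ω)) ∂P)
      atTop (𝓝 (ENNReal.ofReal (1 - α))) := by
    have hconst : ∫⁻ _ : Ω, μ (Set.Iic q) ∂P = ENNReal.ofReal (1 - α) := by
      rw [lintegral_const, hμIicq]
      simp
    rw [← hconst]
    refine tendsto_lintegral_of_dominated_convergence (fun _ => 1)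
      (fun n => hGmeas.comp (hWmeas n)) (fun n => ?_) (by simp) ?_
    · filter_upwards with ω
      exact prob_le_one
    · filter_upwards [main1] with ω hω
      have : Tendsto (fun n => ENNReal.ofReal (F (empiricalConformalQuantile α Z n ω)))
          atTop (𝓝 (ENNReal.ofReal (F q))) :=
        (ENNReal.continuous_ofReal.tendsto _).comp (hcont.tendsto.comp hω)
      simp_rw [hGeq]
      exact this
  have hfinal := (ENNReal.tendsto_toReal (by simp : ENNReal.ofReal (1 - α) ≠ ⊤)).comp hlim
  rw [ENNReal.toReal_ofReal (by linarith : (0:ℝ) ≤ 1 - α)] at hfinal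
  refine Tendsto.congr (fun n => ?_) hfinal
  simp only [Function.comp_apply]
  rw [← hcov n]
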